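/- Consider the two-timepoint model: A₁ ~ Bernoulli(p); I₂ | A₁ ~ Bernoulli(ρ₀ − ρ₁ A₁); A₂ = 0 if I₂ = 0 and A₂ | (I₂ = 1) ~ Bernoulli(p) independent of A₁ given I₂; outcome Y = β₀ + β₁ A₁ + β₂ A₂ − α A₁ A₂ + ε with ε mean-zero and independent of (A₁, I₂, A₂). Then E[Y | A₁ = 1] − E[Y | A₁ = 0] = β₁ − p ρ₀ α + p ρ₁ α − p ρ₁ β₂. -/

import Mathlib

open MeasureTheory ProbabilityTheory

/-- in the two-timepoint model with treatment-dependent eligibility and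
Y = β₀ + β₁A₁ + β₂A₂ − αA₁A₂ + ε, we have
E[Y | A₁ = 1] − E[Y | A₁ = 0] = β₁ − pρ₀α + pρ₁α − pρ₁β₂. -/
theorem stmt_10 {Ω : Type*} [MeasurableSpace Ω] (μ : Measure Ω) [IsProbabilityMeasure μ]
    (A1 I2 A2 : Ω → ℕ) (ε Y : Ω → ℝ)
    (hA1m : Measurable A1) (hI2m : Measurable I2) (hA2m : Measurable A2)
    (hεm : Measurable ε)
    (hA101 : ∀ ω, A1 ω = 0 ∨ A1 ω = 1) (hI201 : ∀ ω, I2 ω = 0 ∨ I2 ω = 1)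
    (hA201 : ∀ ω, A2 ω = 0 ∨ A2 ω = 1)
    (p ρ₀ ρ₁ β₀ β₁ β₂ α : ℝ) (hp0 : 0 < p) (hp1 : p < 1)
    (hρ : 0 ≤ ρ₀ - ρ₁ ∧ ρ₀ - ρ₁ ≤ ρ₀ ∧ ρ₀ ≤ 1)
    (hA1Bern : μ {ω | A1 ω = 1} = ENNReal.ofReal p)
    (hI2cond : ∀ a, a = 0 ∨ a = 1 →
      μ {ω | I2 ω = 1 ∧ A1 ω = a} = ENNReal.ofReal (ρ₀ - ρ₁ * a) * μ {ω | A1 ω = a})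
    (hA2cond : ∀ a, a = 0 ∨ a = 1 →
      μ {ω | A2 ω = 1 ∧ I2 ω = 1 ∧ A1 ω = a}
        = ENNReal.ofReal p * μ {ω | I2 ω = 1 ∧ A1 ω = a})
    (hA2elig : ∀ ω, I2 ω = 0 → A2 ω = 0)
    (hεint : Integrable ε μ) (hεmean : ∫ ω, ε ω ∂μ = 0)
    (hεindep : IndepFun ε (fun ω => (A1 ω, I2 ω, A2 ω)) μ)
    (hY : ∀ ω, Y ω = β₀ + β₁ * A1 ω + β₂ * A2 ω - α * A1 ω * A2 ω + ε ω) :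
    (∫ ω, (if A1 ω = 1 then Y ω else 0) ∂μ) / (μ {ω | A1 ω = 1}).toReal
      - (∫ ω, (if A1 ω = 0 then Y ω else 0) ∂μ) / (μ {ω | A1 ω = 0}).toReal
    = β₁ - p * ρ₀ * α + p * ρ₁ * α - p * ρ₁ * β₂ := by
  have hs : ∀ a : ℕ, MeasurableSet {ω | A1 ω = a} :=
    fun a => hA1m (measurableSet_singleton a)
  have hs2 : ∀ a : ℕ, MeasurableSet {ω | A2 ω = 1 ∧ A1 ω = a} :=
    fun a => (hA2m (measurableSet_singleton 1)).inter (hs a)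
  -- measure of the joint event
  have hmeas2 : ∀ a : ℕ, a = 0 ∨ a = 1 →
      μ {ω | A2 ω = 1 ∧ A1 ω = a}
        = ENNReal.ofReal p * (ENNReal.ofReal (ρ₀ - ρ₁ * a) * μ {ω | A1 ω = a}) := by
    intro a ha
    have hset : {ω | A2 ω = 1 ∧ A1 ω = a} = {ω | A2 ω = 1 ∧ I2 ω = 1 ∧ A1 ω = a} := by
      ext ω
      simp only [Set.mem_setOf_eq]
      constructor
      · rintro ⟨h2, h1⟩
        refine ⟨h2, ?_, h1⟩
        rcases hI201 ω with h | h
        · exact absurd (hA2elig ω h) (by simp [h2])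
        · exact h
      · rintro ⟨h2, _, h1⟩; exact ⟨h2, h1⟩
    rw [hset, hA2cond a ha, hI2cond a ha]
  -- ε cross term vanishes
  have hεterm : ∀ a : ℕ, ∫ ω, ε ω * (if A1 ω = a then (1:ℝ) else 0) ∂μ = 0 := by
    intro a
    have hφ : Measurable (fun x : ℕ × ℕ × ℕ => if x.1 = a then (1:ℝ) else 0) :=
      measurable_of_countable _
    have hgind : IndepFun ε (fun ω => if A1 ω = a then (1:ℝ) else 0) μ :=
      hεindep.comp measurable_id hφ
    have hig : Integrable (fun ω => if A1 ω = a then (1:ℝ) else 0) μ :=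
      ((integrable_const (1:ℝ)).indicator (μ := μ) (hs a)).congr
        (Filter.Eventually.of_forall fun ω => by simp [Set.indicator_apply])
    have h := hgind.integral_mul_eq_mul_integral hεint.aestronglyMeasurable hig.aestronglyMeasurable
    calc ∫ ω, ε ω * (if A1 ω = a then (1:ℝ) else 0) ∂μ
        = integral μ (ε * fun ω => if A1 ω = a then (1:ℝ) else 0) := rfl
      _ = 0 := by rw [h, hεmean, zero_mul]
  have hind : ∀ a : ℕ, ∫ ω, (if A1 ω = a then (1:ℝ) else 0) ∂μ
      = (μ {ω | A1 ω = a}).toReal := by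
    intro a
    rw [← measureReal_def, ← integral_indicator_one (hs a)]
    refine integral_congr_ae (Filter.Eventually.of_forall fun ω => ?_)
    simp [Set.indicator_apply, Set.mem_setOf_eq]
  have hind2 : ∀ a : ℕ, ∫ ω, (if A2 ω = 1 ∧ A1 ω = a then (1:ℝ) else 0) ∂μ
      = (μ {ω | A2 ω = 1 ∧ A1 ω = a}).toReal := by
    intro a
    rw [← measureReal_def, ← integral_indicator_one (hs2 a)]
    refine integral_congr_ae (Filter.Eventually.of_forall fun ω => ?_)
    simp [Set.indicator_apply, Set.mem_setOf_eq]
  -- the key conditional integral computation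
  have key : ∀ a : ℕ, a = 0 ∨ a = 1 →
      ∫ ω, (if A1 ω = a then Y ω else 0) ∂μ
        = (β₀ + β₁ * a + (β₂ - α * a) * (p * (ρ₀ - ρ₁ * a))) * (μ {ω | A1 ω = a}).toReal := by
    intro a ha
    have hρa : 0 ≤ ρ₀ - ρ₁ * a := by
      rcases ha with h | h <;> subst h <;> push_cast <;>
        [skip; skip] <;> obtain ⟨h1, h2, h3⟩ := hρ <;> linarith
    have hfun : ∀ ω, (if A1 ω = a then Y ω else 0)
        = (β₀ + β₁ * a) * (if A1 ω = a then (1:ℝ) else 0)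
          + (β₂ - α * a) * (if A2 ω = 1 ∧ A1 ω = a then (1:ℝ) else 0)
          + ε ω * (if A1 ω = a then (1:ℝ) else 0) := by
      intro ω
      by_cases h : A1 ω = a
      · have h' : (if A1 ω = a then (1:ℝ) else 0) = 1 := if_pos h
        rcases hA201 ω with h2 | h2
        · have h2' : (if A2 ω = 1 ∧ A1 ω = a then (1:ℝ) else 0) = 0 :=
            if_neg (by simp [h2])
          rw [if_pos h, h', h2', hY ω, h, h2]
          push_cast
          ring
        · have h2' : (if A2 ω = 1 ∧ A1 ω = a then (1:ℝ) else 0) = 1 := if_pos ⟨h2, h⟩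
          rw [if_pos h, h', h2', hY ω, h, h2]
          push_cast
          ring
      · have h2' : (if A2 ω = 1 ∧ A1 ω = a then (1:ℝ) else 0) = 0 :=
          if_neg (by simp [h])
        simp [h, h2']
    have hi1 : Integrable (fun ω => (if A1 ω = a then (1:ℝ) else 0)) μ :=
      ((integrable_const (1:ℝ)).indicator (μ := μ) (hs a)).congr
        (Filter.Eventually.of_forall fun ω => by simp [Set.indicator_apply])
    have hi2 : Integrable (fun ω => (if A2 ω = 1 ∧ A1 ω = a then (1:ℝ) else 0)) μ :=
      ((integrable_const (1:ℝ)).indicator (μ := μ) (hs2 a)).congr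
        (Filter.Eventually.of_forall fun ω => by simp [Set.indicator_apply])
    have hi3 : Integrable (fun ω => ε ω * (if A1 ω = a then (1:ℝ) else 0)) μ :=
      (hεint.indicator (hs a)).congr
        (Filter.Eventually.of_forall fun ω => by
          simp [Set.indicator_apply, mul_ite, mul_one, mul_zero])
    have hi1' : Integrable (fun ω => (β₀ + β₁ * a) * (if A1 ω = a then (1:ℝ) else 0)) μ :=
      hi1.const_mul _
    have hi2' : Integrable
        (fun ω => (β₂ - α * a) * (if A2 ω = 1 ∧ A1 ω = a then (1:ℝ) else 0)) μ :=
      hi2.const_mul _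
    have hi12 : Integrable (fun ω => (β₀ + β₁ * a) * (if A1 ω = a then (1:ℝ) else 0)
        + (β₂ - α * a) * (if A2 ω = 1 ∧ A1 ω = a then (1:ℝ) else 0)) μ := hi1'.add hi2'
    have hm2 : (μ {ω | A2 ω = 1 ∧ A1 ω = a}).toReal
        = p * ((ρ₀ - ρ₁ * a) * (μ {ω | A1 ω = a}).toReal) := by
      rw [hmeas2 a ha, ENNReal.toReal_mul, ENNReal.toReal_mul,
          ENNReal.toReal_ofReal hp0.le, ENNReal.toReal_ofReal hρa]
    calc ∫ ω, (if A1 ω = a then Y ω else 0) ∂μ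
        = ∫ ω, ((β₀ + β₁ * a) * (if A1 ω = a then (1:ℝ) else 0)
            + (β₂ - α * a) * (if A2 ω = 1 ∧ A1 ω = a then (1:ℝ) else 0)
            + ε ω * (if A1 ω = a then (1:ℝ) else 0)) ∂μ :=
          integral_congr_ae (Filter.Eventually.of_forall hfun)
      _ = (β₀ + β₁ * a) * (μ {ω | A1 ω = a}).toReal
            + (β₂ - α * a) * (μ {ω | A2 ω = 1 ∧ A1 ω = a}).toReal + 0 := by
          rw [integral_add hi12 hi3, integral_add hi1' hi2',
              integral_const_mul, integral_const_mul, hεterm a, hind a, hind2 a]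
      _ = (β₀ + β₁ * a + (β₂ - α * a) * (p * (ρ₀ - ρ₁ * a))) * (μ {ω | A1 ω = a}).toReal := by
          rw [hm2]; ring
  have h1 : (μ {ω | A1 ω = 1}).toReal = p := by
    rw [hA1Bern, ENNReal.toReal_ofReal hp0.le]
  have hcompl : {ω | A1 ω = 0} = {ω | A1 ω = 1}ᶜ := by
    ext ω
    simp only [Set.mem_setOf_eq, Set.mem_compl_iff]
    rcases hA101 ω with h | h <;> simp [h]
  have h0 : (μ {ω | A1 ω = 0}).toReal = 1 - p := by
    rw [hcompl, measure_compl (hs 1) (measure_ne_top μ _), measure_univ, hA1Bern,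
        ENNReal.toReal_sub_of_le (ENNReal.ofReal_le_one.2 hp1.le) ENNReal.one_ne_top,
        ENNReal.toReal_one, ENNReal.toReal_ofReal hp0.le]
  rw [key 1 (Or.inr rfl), key 0 (Or.inl rfl), h1, h0]
  have hp' : p ≠ 0 := ne_of_gt hp0
  have h1p : (1 : ℝ) - p ≠ 0 := by intro h; linarith [sub_eq_zero.mp h]
  push_cast
  field_simp
  ring
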